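/- Let g be the flat Bargmann metric on ℝ^{d+2} (g = Σᵢ₌₁^d (dxⁱ)² + 2 dt ⊙ ds with t = x^{d+1}, s = x^{d+2}) and ξ = ∂/∂s. For Λ ∈ so(d+1,1) (g-skew endomorphism), Γ ∈ ℝ^{d+2}, and α, χ ∈ ℝ with Λξ + χξ = 0, the vector field Z(x) = Λx + Γ − (1/2)α g(x,x)ξ + α g(ξ,x)x + χx satisfies the conformal Killing equation L_Z g = φ_Z · g for the function φ_Z(x) = 2(α g(ξ,x) + χ), and satisfies L_Z ξ = 0 (i.e., [Z, ∂/∂s] = 0). -/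

import Mathlib

/-- Extended (Bargmann) space `ℝ^{d+2}` with coordinates `(x¹,…,x^d,t,s)`. -/
abbrev BSpace (d : ℕ) := Fin (d+2) → ℝ

/-- Index of the time coordinate `t = x^{d+1}`. -/
def tIdx (d : ℕ) : Fin (d+2) := ⟨d, by omega⟩

/-- Index of the vertical coordinate `s = x^{d+2}`. -/
def sIdx (d : ℕ) : Fin (d+2) := ⟨d+1, by omega⟩

/-- Flat Bargmann metric `g = Σᵢ (dxⁱ)² + 2dt⊙ds` on `ℝ^{d+2}`. -/
def gB (d : ℕ) (x y : BSpace d) : ℝ :=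
  (∑ i : Fin d, x (Fin.castAdd 2 i) * y (Fin.castAdd 2 i))
    + x (tIdx d) * y (sIdx d) + x (sIdx d) * y (tIdx d)

/-- The null vector `ξ = ∂/∂s`. -/
noncomputable def ξB (d : ℕ) : BSpace d := Pi.single (sIdx d) 1

/-- Ambient space `ℝ^{d+2,2} = ℝ^{d+2} ⊕ ℝ²`. -/
abbrev ASpace (d : ℕ) := BSpace d × ℝ × ℝ

/-- Ambient metric `G` with Gram matrix `[[g,0,0],[0,0,1],[0,1,0]]`. -/
def GA (d : ℕ) (u v : ASpace d) : ℝ :=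
  gB d u.1 v.1 + u.2.1 * v.2.2 + u.2.2 * v.2.1

/-- The special null element `Z₀ = [[0,0,ξ],[−ξ*,0,0],[0,0,0]]` of `o(d+2,2)`:
`Z₀(x,a,b) = (bξ, −θ(x), 0)` with `θ = g(ξ,·)`. -/
noncomputable def Z0 (d : ℕ) (u : ASpace d) : ASpace d :=
  (u.2.2 • ξB d, -gB d (ξB d) u.1, 0)


lemma gB_comm (d : ℕ) (x y : BSpace d) : gB d x y = gB d y x := by
  simp only [gB, mul_comm]; ring

lemma gB_add_left (d : ℕ) (x y z : BSpace d) :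
    gB d (x + y) z = gB d x z + gB d y z := by
  simp only [gB, Pi.add_apply, add_mul, Finset.sum_add_distrib]; ring

lemma gB_smul_left (d : ℕ) (c : ℝ) (x z : BSpace d) :
    gB d (c • x) z = c * gB d x z := by
  simp only [gB, Pi.smul_apply, smul_eq_mul, mul_add, Finset.mul_sum, mul_assoc]

lemma gB_add_right (d : ℕ) (x y z : BSpace d) :
    gB d z (x + y) = gB d z x + gB d z y := by
  rw [gB_comm, gB_add_left, gB_comm d x z, gB_comm d y z]

lemma gB_smul_right (d : ℕ) (c : ℝ) (x z : BSpace d) :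
    gB d z (c • x) = c * gB d z x := by
  rw [gB_comm, gB_smul_left, gB_comm]

lemma gB_sub_left (d : ℕ) (x y z : BSpace d) :
    gB d (x - y) z = gB d x z - gB d y z := by
  have := gB_add_left d (x - y) y z; rw [sub_add_cancel] at this; linarith

lemma gB_sub_right (d : ℕ) (x y z : BSpace d) :
    gB d z (x - y) = gB d z x - gB d z y := by
  rw [gB_comm, gB_sub_left, gB_comm d x z, gB_comm d y z]

lemma gB_xi_xi (d : ℕ) : gB d (ξB d) (ξB d) = 0 := by
  simp only [gB, ξB, Pi.single_apply, tIdx, sIdx, Fin.ext_iff]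
  rw [Finset.sum_eq_zero]
  · norm_num
  · intro i _
    have : (Fin.castAdd 2 i : Fin (d+2)).val = i.val := rfl
    have : i.val < d := i.isLt
    simp [Fin.castAdd, Fin.castLE]
    omega

noncomputable def gBlin (d : ℕ) : BSpace d →ₗ[ℝ] BSpace d →ₗ[ℝ] ℝ :=
  LinearMap.mk₂ ℝ (gB d) (gB_add_left d) (fun c x z => gB_smul_left d c x z)
    (fun m n₁ n₂ => gB_add_right d n₁ n₂ m) (fun c x z => gB_smul_right d c z x)

noncomputable def gBclm (d : ℕ) : BSpace d →L[ℝ] BSpace d →L[ℝ] ℝ :=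
  LinearMap.toContinuousLinearMap
    { toFun := fun x => LinearMap.toContinuousLinearMap (gBlin d x)
      map_add' := by intro x y; ext z; simp [gBlin, gB_add_left]
      map_smul' := by intro c x; ext z; simp [gBlin, gB_smul_left] }

@[simp] lemma gBclm_apply (d : ℕ) (x y : BSpace d) : gBclm d x y = gB d x y := by
  simp [gBclm, gBlin]

lemma key_fderiv (d : ℕ) (Λ : BSpace d →ₗ[ℝ] BSpace d) (Γ : BSpace d) (α χ : ℝ)
    (Z : BSpace d → BSpace d)
    (hZ : ∀ x : BSpace d, Z x =
      Λ x + Γ - (α / 2 * gB d x x) • ξB d + (α * gB d (ξB d) x) • x + χ • x)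
    (x u : BSpace d) :
    fderiv ℝ Z x u = Λ u - (α * gB d x u) • ξB d
      + ((α * gB d (ξB d) x) • u + (α * gB d (ξB d) u) • x) + χ • u := by
  have hZf : Z = fun x => LinearMap.toContinuousLinearMap Λ x + Γ
      - (α / 2 * (gBclm d x x)) • ξB d + (α * (gBclm d (ξB d) x)) • x + χ • x := by
    funext y; simpa using hZ y
  have hq : HasFDerivAt (fun y : BSpace d => gBclm d y y)
      ((gBclm d x).comp (ContinuousLinearMap.id ℝ (BSpace d))
        + (gBclm d).flip x) x :=
    (gBclm d).hasFDerivAt.clm_apply (hasFDerivAt_id x)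
  have h1 : HasFDerivAt (fun y : BSpace d => LinearMap.toContinuousLinearMap Λ y + Γ)
      (LinearMap.toContinuousLinearMap Λ) x :=
    (LinearMap.toContinuousLinearMap Λ).hasFDerivAt.add_const Γ
  have h2 : HasFDerivAt (fun y : BSpace d => (α / 2 * (gBclm d y y)) • ξB d)
      (((α / 2) • ((gBclm d x).comp (ContinuousLinearMap.id ℝ (BSpace d))
        + (gBclm d).flip x)).smulRight (ξB d)) x :=
    (hq.const_mul (α / 2)).smul_const (ξB d)
  have h3 : HasFDerivAt (fun y : BSpace d => (α * (gBclm d (ξB d) y)) • y)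
      ((α * (gBclm d (ξB d) x)) • ContinuousLinearMap.id ℝ (BSpace d)
        + (α • gBclm d (ξB d)).smulRight x) x :=
    ((gBclm d (ξB d)).hasFDerivAt.const_mul α).smul (hasFDerivAt_id x)
  have h4 : HasFDerivAt (fun y : BSpace d => χ • y)
      (χ • ContinuousLinearMap.id ℝ (BSpace d)) x :=
    (hasFDerivAt_id x).const_smul χ
  have hD : HasFDerivAt (fun y : BSpace d => LinearMap.toContinuousLinearMap Λ y + Γ
      - (α / 2 * (gBclm d y y)) • ξB d + (α * (gBclm d (ξB d) y)) • y + χ • y) _ x :=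
    (((h1.sub h2).add h3).add h4)
  rw [hZf, hD.fderiv]
  simp only [ContinuousLinearMap.add_apply, ContinuousLinearMap.sub_apply,
    ContinuousLinearMap.smulRight_apply, ContinuousLinearMap.smul_apply,
    ContinuousLinearMap.coe_comp', Function.comp_apply, ContinuousLinearMap.coe_id',
    id_eq, ContinuousLinearMap.flip_apply, gBclm_apply, smul_eq_mul,
    LinearMap.coe_toContinuousLinearMap']
  rw [gB_comm d u x, show α / 2 * (gB d x u + gB d x u) = α * gB d x u by ring]


/-- each vector field of the Schrödinger Lie algebra
`Z(x) = Λx + Γ − (α/2)g(x,x)ξ + α g(ξ,x)x + χx` (with `Λ ∈ so(d+1,1)`,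
`Λξ + χξ = 0`) is conformal Killing for the flat Bargmann metric with
conformal factor `φ_Z(x) = 2(α g(ξ,x) + χ)`, and commutes with `ξ = ∂/∂s`. -/
theorem schroedinger_field_conformal_killing (d : ℕ)
    (Λ : BSpace d →ₗ[ℝ] BSpace d)
    (hΛskew : ∀ u v : BSpace d, gB d (Λ u) v + gB d u (Λ v) = 0)
    (Γ : BSpace d) (α χ : ℝ)
    (hconstraint : Λ (ξB d) + χ • ξB d = 0)
    (Z : BSpace d → BSpace d)
    (hZ : ∀ x : BSpace d, Z x =
      Λ x + Γ - (α / 2 * gB d x x) • ξB d + (α * gB d (ξB d) x) • x + χ • x) :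
    (∀ x u v : BSpace d,
      gB d (fderiv ℝ Z x u) v + gB d u (fderiv ℝ Z x v)
        = (2 * (α * gB d (ξB d) x + χ)) * gB d u v)
    ∧ (∀ x : BSpace d, fderiv ℝ Z x (ξB d) = 0) := by
  constructor
  · intro x u v
    rw [key_fderiv d Λ Γ α χ Z hZ x u, key_fderiv d Λ Γ α χ Z hZ x v]
    simp only [gB_add_left, gB_add_right, gB_sub_left, gB_sub_right,
      gB_smul_left, gB_smul_right]
    rw [gB_comm d u (ξB d), gB_comm d u x]
    linear_combination hΛskew u v
  · intro x
    rw [key_fderiv d Λ Γ α χ Z hZ x (ξB d), gB_comm d x (ξB d), gB_xi_xi]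
    simp only [mul_zero, zero_smul, add_zero, sub_add_cancel]
    exact hconstraint
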